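/- Fix ε ∈ (0,1) and for n ≥ 0 and k = 1,…,2^n set G_n(k) := G_ε ∩ [(k−1)2^{−n}, k·2^{−n}]. Then for all n and all k, G_n(k) = G_{n+1}(2k−1) ∪ G_{n+1}(2k), and G_n(k) is quasi self-similar: {2x − (k−1)2^{−n} : x ∈ G_{n+1}(2k−1)} ⊆ G_n(k) ⊆ {2x − k·2^{−n} : x ∈ G_{n+1}(2k)}. -/

import Mathlib

open Filter Set MeasureTheory

noncomputable section

/-- `g_0(z) = 2z - z²` (bit `false`), `g_1(z) = z²` (bit `true`). -/
def gBit (c : Bool) (z : ℝ) : ℝ := if c then z ^ 2 else 2 * z - z ^ 2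

/-- `pPre b n z = g_{b_n}(g_{b_{n-1}}(⋯ g_{b_1}(z) ⋯))`, where `b_i` is `b (i-1)`. -/
def pPre (b : ℕ → Bool) : ℕ → ℝ → ℝ
  | 0, z => z
  | n + 1, z => gBit (b n) (pPre b n z)

/-- `f(b) = Σ_{n ≥ 1} b_n 2^{-n}`. -/
def fBin (b : ℕ → Bool) : ℝ := ∑' n : ℕ, (if b n then (1 : ℝ) else 0) / 2 ^ (n + 1)

/-- The dyadic rationals in `[0,1]`. -/
def dyadics : Set ℝ := Set.Icc 0 1 ∩ {x : ℝ | ∃ (p : ℤ) (n : ℕ), x = (p : ℝ) / 2 ^ n}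

/-- The good channels of a BEC with erasure probability `ε`: `x ∈ [0,1]` such that some binary
expansion `b` of `x` satisfies `p_{b^n}(ε) → 0`. -/
def Gset (ε : ℝ) : Set ℝ :=
  {x : ℝ | ∃ b : ℕ → Bool, fBin b = x ∧ Tendsto (fun n => pPre b n ε) atTop (nhds 0)}

/-- The bad channels of a BEC with erasure probability `ε`: `x ∈ [0,1]` such that some binary
expansion `b` of `x` satisfies `p_{b^n}(ε) → 1`. -/
def Bset (ε : ℝ) : Set ℝ :=
  {x : ℝ | ∃ b : ℕ → Bool, fBin b = x ∧ Tendsto (fun n => pPre b n ε) atTop (nhds 1)}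

/-- Hamming weight `w(b^n)` of the length-`n` prefix of `b`. -/
def wPre (b : ℕ → Bool) (n : ℕ) : ℕ := ∑ i ∈ Finset.range n, (if b i then 1 else 0)

/-- `b` is `ρ`-heavy: `liminf_{n→∞} (w(b^n) - nρ) ≥ 0` (the liminf computed in `EReal`),
equivalently `liminf 2^{w(b^n)} / 2^{nρ} ≥ 1`. -/
def Heavy (ρ : ℝ) (b : ℕ → Bool) : Prop :=
  0 ≤ atTop.liminf (fun n : ℕ => (((wPre b n : ℝ) - n * ρ : ℝ) : EReal))

/-- The set of `ρ`-heavy channels. -/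
def Hset (ρ : ℝ) : Set ℝ := {x : ℝ | ∃ b : ℕ → Bool, fBin b = x ∧ Heavy ρ b}


/-- `G_n(k) = G_ε ∩ [(k-1)2^{-n}, k 2^{-n}]`. -/
def GnSet (ε : ℝ) (n k : ℕ) : Set ℝ :=
  Gset ε ∩ Set.Icc (((k : ℝ) - 1) / 2 ^ n) ((k : ℝ) / 2 ^ n)


-- auxiliary
def GoodB (ε : ℝ) (b : ℕ → Bool) : Prop := Tendsto (fun n => pPre b n ε) atTop (nhds 0)

@[simp] lemma gBit_false (z : ℝ) : gBit false z = 2 * z - z ^ 2 := rfl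
@[simp] lemma gBit_true (z : ℝ) : gBit true z = z ^ 2 := rfl

lemma gBit_mem {c : Bool} {z : ℝ} (hz : z ∈ Set.Icc (0:ℝ) 1) : gBit c z ∈ Set.Icc (0:ℝ) 1 := by
  obtain ⟨h0, h1⟩ := hz
  cases c <;> simp only [gBit_false, gBit_true, Set.mem_Icc] <;> constructor <;> nlinarith

lemma gBit_mem_Ioo {c : Bool} {z : ℝ} (hz : z ∈ Set.Ioo (0:ℝ) 1) : gBit c z ∈ Set.Ioo (0:ℝ) 1 := by
  obtain ⟨h0, h1⟩ := hz
  cases c <;> simp only [gBit_false, gBit_true, Set.mem_Ioo] <;> constructor <;> nlinarith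

lemma gBit_mono {c : Bool} {z w : ℝ} (h0 : 0 ≤ z) (h1 : w ≤ 1) (hzw : z ≤ w) :
    gBit c z ≤ gBit c w := by
  cases c <;> simp only [gBit_false, gBit_true] <;> nlinarith

lemma pPre_mem {b : ℕ → Bool} {z : ℝ} (hz : z ∈ Set.Icc (0:ℝ) 1) (n : ℕ) :
    pPre b n z ∈ Set.Icc (0:ℝ) 1 := by
  induction n with
  | zero => exact hz
  | succ n ih => exact gBit_mem ih

lemma pPre_mem_Ioo {b : ℕ → Bool} {z : ℝ} (hz : z ∈ Set.Ioo (0:ℝ) 1) (n : ℕ) :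
    pPre b n z ∈ Set.Ioo (0:ℝ) 1 := by
  induction n with
  | zero => exact hz
  | succ n ih => exact gBit_mem_Ioo ih

lemma pPre_mono {b : ℕ → Bool} {z w : ℝ} (hz : z ∈ Set.Icc (0:ℝ) 1)
    (hw : w ∈ Set.Icc (0:ℝ) 1) (hzw : z ≤ w) (n : ℕ) : pPre b n z ≤ pPre b n w := by
  induction n with
  | zero => exact hzw
  | succ n ih => exact gBit_mono (pPre_mem hz n).1 (pPre_mem hw n).2 ih

lemma good_mono {ε ε' : ℝ} {b : ℕ → Bool} (h0 : ε' ∈ Set.Icc (0:ℝ) 1)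
    (h1 : ε ∈ Set.Icc (0:ℝ) 1) (hle : ε' ≤ ε) (h : GoodB ε b) : GoodB ε' b := by
  refine squeeze_zero (fun n => (pPre_mem h0 n).1) (fun n => pPre_mono h0 h1 hle n) h

def consB (c : Bool) (b : ℕ → Bool) : ℕ → Bool := fun i => match i with
  | 0 => c
  | j + 1 => b j

@[simp] lemma consB_zero (c : Bool) (b : ℕ → Bool) : consB c b 0 = c := rfl
@[simp] lemma consB_succ (c : Bool) (b : ℕ → Bool) (j : ℕ) : consB c b (j+1) = b j := rfl

lemma consB_tail (b : ℕ → Bool) : consB (b 0) (fun i => b (i+1)) = b := by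
  funext i; cases i <;> rfl

lemma pPre_cons (c : Bool) (b : ℕ → Bool) (n : ℕ) (z : ℝ) :
    pPre (consB c b) (n+1) z = pPre b n (gBit c z) := by
  induction n with
  | zero => rfl
  | succ n ih => show gBit (b n) _ = _ ; rw [ih]; rfl

lemma good_cons {ε : ℝ} {c : Bool} {b : ℕ → Bool} (h : GoodB (gBit c ε) b) :
    GoodB ε (consB c b) := by
  have : Tendsto (fun n => pPre (consB c b) (n+1) ε) atTop (nhds 0) := by
    simpa only [pPre_cons, GoodB] using h
  exact (tendsto_add_atTop_iff_nat 1).mp this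

lemma good_tail {ε : ℝ} {b : ℕ → Bool} (h : GoodB ε b) :
    GoodB (gBit (b 0) ε) (fun i => b (i+1)) := by
  have h2 : Tendsto (fun n => pPre b (n+1) ε) atTop (nhds 0) :=
    (tendsto_add_atTop_iff_nat 1).mpr h
  have he : ∀ n, pPre b (n+1) ε = pPre (fun i => b (i+1)) n (gBit (b 0) ε) := by
    intro n
    conv_lhs => rw [← consB_tail b]
    rw [pPre_cons]
  simpa only [he, GoodB] using h2

lemma summable_half : Summable (fun n : ℕ => ((1:ℝ)/2) ^ (n+1)) := by
  simpa only [pow_succ] using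
    (summable_geometric_of_lt_one (by norm_num) (by norm_num : (1:ℝ)/2 < 1)).mul_right (1/2)

lemma fBin_term_le (b : ℕ → Bool) (n : ℕ) :
    (if b n then (1:ℝ) else 0) / 2 ^ (n + 1) ≤ ((1:ℝ)/2) ^ (n+1) := by
  rw [div_pow, one_pow]
  split
  · exact le_rfl
  · rw [zero_div]; positivity

lemma summable_fBin (b : ℕ → Bool) :
    Summable (fun n => (if b n then (1:ℝ) else 0) / 2 ^ (n + 1)) :=
  Summable.of_nonneg_of_le (fun n => by positivity) (fBin_term_le b) summable_half

lemma fBin_nonneg (b : ℕ → Bool) : 0 ≤ fBin b :=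
  tsum_nonneg (fun n => by positivity)

lemma tsum_half : ∑' n : ℕ, ((1:ℝ)/2) ^ (n+1) = 1 := by
  have := tsum_geometric_of_lt_one (by norm_num : (0:ℝ) ≤ 1/2) (by norm_num : (1:ℝ)/2 < 1)
  calc ∑' n : ℕ, ((1:ℝ)/2) ^ (n+1) = ∑' n : ℕ, ((1:ℝ)/2) ^ n * (1/2) := by
        simp only [pow_succ]
    _ = (1 - 1/2)⁻¹ * (1/2) := by rw [tsum_mul_right, this]
    _ = 1 := by norm_num

lemma fBin_le_one (b : ℕ → Bool) : fBin b ≤ 1 := by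
  rw [← tsum_half]
  exact (summable_fBin b).tsum_le_tsum (fBin_term_le b) summable_half

lemma fBin_cons (c : Bool) (b : ℕ → Bool) :
    fBin (consB c b) = ((if c then (1:ℝ) else 0) + fBin b) / 2 := by
  unfold fBin
  rw [(summable_fBin (consB c b)).tsum_eq_zero_add]
  show (if c then (1:ℝ) else 0) / 2 ^ (0 + 1) + ∑' j : ℕ, (if b j then (1:ℝ) else 0) / 2 ^ (j + 1 + 1) = _
  have : ∀ j : ℕ, (if b j then (1:ℝ) else 0) / 2 ^ (j + 1 + 1)
      = (if b j then (1:ℝ) else 0) / 2 ^ (j + 1) / 2 := by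
    intro j; rw [pow_succ]; ring
  rw [tsum_congr this, tsum_div_const]
  ring

lemma fBin_true : fBin (fun _ => true) = 1 := by
  rw [← tsum_half]
  exact tsum_congr (fun n => by rw [if_pos rfl, div_pow, one_pow])

lemma pPre_true (z : ℝ) (n : ℕ) : pPre (fun _ => true) n z = z ^ (2 ^ n) := by
  induction n with
  | zero => simp [pPre]
  | succ n ih =>
    show gBit true _ = _
    rw [ih, gBit_true, ← pow_mul, pow_succ]

lemma halfdiv (a : ℝ) (m : ℕ) : a / 2^m = 2 * (a / 2^(m+1)) := by
  rw [pow_succ]; ring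

lemma good_dyadic : ∀ m : ℕ, ∀ a : ℕ, a < 2^m → ∀ ε : ℝ, ε ∈ Set.Ioo (0:ℝ) 1 →
    ∃ b : ℕ → Bool, fBin b = ((a:ℝ)+1)/2^m ∧ GoodB ε b := by
  intro m
  induction m with
  | zero =>
    intro a ha ε hε
    interval_cases a
    refine ⟨fun _ => true, by rw [fBin_true]; norm_num, ?_⟩
    have h1 : Tendsto (fun j : ℕ => ε ^ j) atTop (nhds 0) :=
      tendsto_pow_atTop_nhds_zero_of_lt_one hε.1.le hε.2
    have h2 : Tendsto (fun j : ℕ => 2 ^ j) atTop atTop :=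
      tendsto_pow_atTop_atTop_of_one_lt one_lt_two
    have := h1.comp h2
    unfold GoodB
    simp only [pPre_true]
    exact this
  | succ m ih =>
    intro a ha ε hε
    by_cases h : a < 2^m
    · obtain ⟨b₀, hb₀, hg₀⟩ := ih a h (gBit false ε) (gBit_mem_Ioo hε)
      refine ⟨consB false b₀, ?_, good_cons hg₀⟩
      rw [fBin_cons, hb₀]
      have : ((2:ℝ))^(m+1) = 2^m * 2 := by rw [pow_succ]
      rw [this]
      have hm : ((2:ℝ))^m ≠ 0 := by positivity
      field_simp
      simp
    · push_neg at h
      obtain ⟨b₀, hb₀, hg₀⟩ := ih (a - 2^m) (by omega) (gBit true ε) (gBit_mem_Ioo hε)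
      refine ⟨consB true b₀, ?_, good_cons hg₀⟩
      rw [fBin_cons, hb₀]
      have hc : ((a - 2^m : ℕ) : ℝ) = (a:ℝ) - 2^m := by
        push_cast [Nat.cast_sub h]; ring
      rw [hc]
      have : ((2:ℝ))^(m+1) = 2^m * 2 := by rw [pow_succ]
      rw [this]
      have hm : ((2:ℝ))^m ≠ 0 := by positivity
      push_cast
      field_simp
      simp only [if_true, one_mul]
      ring

lemma sq_mem_Icc {ε : ℝ} (hε : ε ∈ Set.Ioo (0:ℝ) 1) : gBit true ε ∈ Set.Icc (0:ℝ) 1 :=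
  Set.Ioo_subset_Icc_self (gBit_mem_Ioo hε)

lemma pow_div_pow_succ (n : ℕ) : ((2:ℝ)^n)/2^(n+1) = 1/2 := by
  rw [pow_succ]; field_simp

lemma lemA : ∀ n : ℕ, ∀ k : ℕ, 1 ≤ k → k ≤ 2^n → ∀ ε : ℝ, ε ∈ Set.Ioo (0:ℝ) 1 →
    ∀ x : ℝ, x ∈ Gset ε → ((k:ℝ)-1)/2^n ≤ x → x ≤ (k:ℝ)/2^n →
    x/2 + (k:ℝ)/2^(n+1) ∈ Gset ε := by
  intro n
  induction n with
  | zero =>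
    intro k hk1 hk2 ε hε x hx h1 h2
    have hk : k = 1 := by omega
    subst hk
    obtain ⟨b, hb, hg⟩ := hx
    refine ⟨consB true b, ?_, good_cons ?_⟩
    · rw [fBin_cons, hb]; norm_num; ring
    · refine good_mono (sq_mem_Icc hε) (Set.Ioo_subset_Icc_self hε) ?_ hg
      have := hε.1; have := hε.2
      simp only [gBit_true]; nlinarith
  | succ n ih =>
    intro k hk1 hk2 ε hε x hx h1 h2
    obtain ⟨b, hb, hg⟩ := hx
    have hxG : x ∈ Gset ε := ⟨b, hb, hg⟩
    rw [← consB_tail b, fBin_cons] at hb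
    have htail := good_tail hg
    have ht0 : 0 ≤ fBin (fun i => b (i+1)) := fBin_nonneg _
    have ht1 : fBin (fun i => b (i+1)) ≤ 1 := fBin_le_one _
    have hp1 : (0:ℝ) < 2^(n+1) := by positivity
    have hp2 : (0:ℝ) < 2^(n+2) := by positivity
    have hp0 : (0:ℝ) < 2^n := by positivity
    have hps1 : ((2:ℝ))^(n+1) = 2^n * 2 := by rw [pow_succ]
    have hps2 : ((2:ℝ))^(n+2) = 2^(n+1) * 2 := by rw [pow_succ]
    cases hc : b 0 with
    | false =>
      rw [hc] at hb htail
      simp only [Bool.false_eq_true, if_false, zero_add] at hb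
      by_cases hk : k ≤ 2^n
      · have hmem : (2*x) ∈ Gset (gBit false ε) :=
          ⟨fun i => b (i+1), by linarith, htail⟩
        have h1' : ((k:ℝ)-1)/2^n ≤ 2*x := by linarith [halfdiv ((k:ℝ)-1) n]
        have h2' : 2*x ≤ (k:ℝ)/2^n := by linarith [halfdiv ((k:ℝ)) n]
        obtain ⟨b₁, hb₁, hg₁⟩ := ih k hk1 hk (gBit false ε) (gBit_mem_Ioo hε) (2*x) hmem h1' h2'
        refine ⟨consB false b₁, ?_, good_cons hg₁⟩
        rw [fBin_cons, hb₁]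
        simp only [Bool.false_eq_true, if_false, zero_add]
        linarith [halfdiv ((k:ℝ)) (n+1)]
      · push_neg at hk
        have hkn : 2^n + 1 ≤ k := hk
        have hkR : ((2:ℝ))^n + 1 ≤ (k:ℝ) := by exact_mod_cast hkn
        have hxle : x ≤ 1/2 := by linarith
        have hxge : 1/2 ≤ x := by
          have h' : ((2:ℝ)^n)/2^(n+1) ≤ ((k:ℝ)-1)/2^(n+1) := by gcongr; linarith
          rw [pow_div_pow_succ] at h'
          linarith
        have hkR2 : (k:ℝ) - 1 ≤ 2^n := by
          have := (div_le_iff₀ hp1).mp (le_trans h1 hxle)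
          rw [hps1] at this; linarith
        have hknat : k = 2^n + 1 := by
          have : (k:ℝ) ≤ ((2^n + 1 : ℕ) : ℝ) := by push_cast; linarith
          have := Nat.cast_le.mp this
          omega
        have hx12 : x = 1/2 := le_antisymm hxle hxge
        obtain ⟨b₂, hb₂, hg₂⟩ := good_dyadic (n+2) (2^(n+1))
          (Nat.pow_lt_pow_succ one_lt_two) ε hε
        refine ⟨b₂, ?_, hg₂⟩
        rw [hb₂, hx12, hknat]
        push_cast
        rw [hps2, hps1]
        field_simp
        ring
    | true =>
      rw [hc] at hb htail
      simp only [if_true, if_pos] at hb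
      by_cases hk : k ≤ 2^n
      · -- x = 1/2 = target
        have hkR : (k:ℝ) ≤ (2:ℝ)^n := by exact_mod_cast hk
        have hxge : 1/2 ≤ x := by linarith
        have hxle : x ≤ 1/2 := by
          have h' : ((k:ℝ))/2^(n+1) ≤ ((2:ℝ)^n)/2^(n+1) := by gcongr
          rw [pow_div_pow_succ] at h'
          linarith
        have hkR2 : (2:ℝ)^n ≤ (k:ℝ) := by
          have := (le_div_iff₀ hp1).mp (le_trans hxge h2)
          rw [hps1] at this; linarith
        have hx12 : x = 1/2 := le_antisymm hxle hxge
        have : x/2 + (k:ℝ)/2^(n+2) = x := by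
          have hkk : (k:ℝ) = 2^n := le_antisymm hkR hkR2
          rw [hx12, hkk, hps2, hps1]; field_simp; ring
        rw [this]; exact hxG
      · push_neg at hk
        set k' := k - 2^n with hk'
        have hknat : k = 2^n + k' := by omega
        have hk'1 : 1 ≤ k' := by omega
        have hk'2 : k' ≤ 2^n := by omega
        have hcast : (k':ℝ) = (k:ℝ) - 2^n := by
          rw [hknat]; push_cast; ring
        have hmem : (2*x - 1) ∈ Gset (gBit true ε) :=
          ⟨fun i => b (i+1), by linarith, htail⟩
        have h1' : ((k':ℝ)-1)/2^n ≤ 2*x - 1 := by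
          rw [hcast]
          have e := halfdiv ((k:ℝ)-2^n-1) n
          have e2 : ((k:ℝ)-2^n-1)/2^(n+1) = ((k:ℝ)-1)/2^(n+1) - 1/2 := by
            rw [hps1]; field_simp; ring
          rw [e2] at e
          linarith
        have h2' : 2*x - 1 ≤ (k':ℝ)/2^n := by
          rw [hcast]
          have e := halfdiv ((k:ℝ)-2^n) n
          have e2 : ((k:ℝ)-2^n)/2^(n+1) = ((k:ℝ))/2^(n+1) - 1/2 := by
            rw [hps1]; field_simp
          rw [e2] at e
          linarith
        obtain ⟨b₁, hb₁, hg₁⟩ := ih k' hk'1 hk'2 (gBit true ε) (gBit_mem_Ioo hε)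
          (2*x - 1) hmem h1' h2'
        refine ⟨consB true b₁, ?_, good_cons hg₁⟩
        rw [fBin_cons, hb₁, hcast]
        simp only [if_true]
        rw [hps2, hps1]
        field_simp
        ring

lemma lemB : ∀ n : ℕ, ∀ k : ℕ, 1 ≤ k → k ≤ 2^n → ∀ ε : ℝ, ε ∈ Set.Ioo (0:ℝ) 1 →
    ∀ x : ℝ, x ∈ Gset ε → (2*(k:ℝ)-2)/2^(n+1) ≤ x → x ≤ (2*(k:ℝ)-1)/2^(n+1) →
    2*x - ((k:ℝ)-1)/2^n ∈ Gset ε := by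
  intro n
  induction n with
  | zero =>
    intro k hk1 hk2 ε hε x hx h1 h2
    have hk : k = 1 := by omega
    subst hk
    obtain ⟨b, hb, hg⟩ := hx
    rw [← consB_tail b, fBin_cons] at hb
    have htail := good_tail hg
    have ht0 : 0 ≤ fBin (fun i => b (i+1)) := fBin_nonneg _
    have hgoal : (2:ℝ)*x - (((1:ℕ):ℝ) - 1)/2^0 = 2*x := by norm_num
    rw [hgoal]
    norm_num at h1 h2
    cases hc : b 0 with
    | false =>
      rw [hc] at hb htail
      simp only [Bool.false_eq_true, if_false, zero_add] at hb
      refine ⟨fun i => b (i+1), by linarith, ?_⟩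
      refine good_mono (Set.Ioo_subset_Icc_self hε) (Set.Ioo_subset_Icc_self (gBit_mem_Ioo hε)) ?_ htail
      have := hε.1; have := hε.2
      simp only [gBit_false]; nlinarith
    | true =>
      rw [hc] at hb
      simp only [if_true] at hb
      have hx12 : x = 1/2 := by linarith
      obtain ⟨b₂, hb₂, hg₂⟩ := good_dyadic 0 0 (by norm_num) ε hε
      refine ⟨b₂, ?_, hg₂⟩
      rw [hb₂, hx12]; norm_num
  | succ n ih =>
    intro k hk1 hk2 ε hε x hx h1 h2
    obtain ⟨b, hb, hg⟩ := hx
    have hxG : x ∈ Gset ε := ⟨b, hb, hg⟩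
    rw [← consB_tail b, fBin_cons] at hb
    have htail := good_tail hg
    have ht0 : 0 ≤ fBin (fun i => b (i+1)) := fBin_nonneg _
    have ht1 : fBin (fun i => b (i+1)) ≤ 1 := fBin_le_one _
    have hp1 : (0:ℝ) < 2^(n+1) := by positivity
    have hp2 : (0:ℝ) < 2^(n+2) := by positivity
    have hp0 : (0:ℝ) < 2^n := by positivity
    have hps1 : ((2:ℝ))^(n+1) = 2^n * 2 := by rw [pow_succ]
    have hps2 : ((2:ℝ))^(n+2) = 2^(n+1) * 2 := by rw [pow_succ]
    cases hc : b 0 with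
    | false =>
      rw [hc] at hb htail
      simp only [Bool.false_eq_true, if_false, zero_add] at hb
      by_cases hk : k ≤ 2^n
      · have hmem : (2*x) ∈ Gset (gBit false ε) :=
          ⟨fun i => b (i+1), by linarith, htail⟩
        have h1' : (2*(k:ℝ)-2)/2^(n+1) ≤ 2*x := by linarith [halfdiv (2*(k:ℝ)-2) (n+1)]
        have h2' : 2*x ≤ (2*(k:ℝ)-1)/2^(n+1) := by linarith [halfdiv (2*(k:ℝ)-1) (n+1)]
        obtain ⟨b₁, hb₁, hg₁⟩ := ih k hk1 hk (gBit false ε) (gBit_mem_Ioo hε) (2*x) hmem h1' h2'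
        refine ⟨consB false b₁, ?_, good_cons hg₁⟩
        rw [fBin_cons, hb₁]
        simp only [Bool.false_eq_true, if_false, zero_add]
        linarith [halfdiv ((k:ℝ)-1) n]
      · push_neg at hk
        have hkn : 2^n + 1 ≤ k := hk
        have hkR : ((2:ℝ))^n + 1 ≤ (k:ℝ) := by exact_mod_cast hkn
        have hxle : x ≤ 1/2 := by linarith
        have hxge : 1/2 ≤ x := by
          have h' : ((2:ℝ)^(n+1))/2^(n+2) ≤ (2*(k:ℝ)-2)/2^(n+2) := by
            gcongr
            rw [hps1]; linarith
          rw [pow_div_pow_succ] at h'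
          linarith
        have hkR2 : (k:ℝ) ≤ 2^n + 1 := by
          have := (div_le_iff₀ hp2).mp (le_trans h1 hxle)
          rw [hps2, hps1] at this; linarith
        have hknat : k = 2^n + 1 := by
          have : (k:ℝ) ≤ ((2^n + 1 : ℕ) : ℝ) := by push_cast; linarith
          have := Nat.cast_le.mp this
          omega
        have hx12 : x = 1/2 := le_antisymm hxle hxge
        have heq : 2*x - ((k:ℝ)-1)/2^(n+1) = x := by
          rw [hx12, hknat]; push_cast; rw [hps1]; field_simp; ring
        rw [heq]; exact hxG
    | true =>
      rw [hc] at hb htail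
      simp only [if_true] at hb
      have hxge : 1/2 ≤ x := by linarith
      by_cases hk : k ≤ 2^n
      · exfalso
        have hkR : (k:ℝ) ≤ (2:ℝ)^n := by exact_mod_cast hk
        have hstrict : (2*(k:ℝ)-1)/2^(n+2) < 1/2 := by
          rw [div_lt_iff₀ hp2, hps2, hps1]; linarith
        linarith
      · push_neg at hk
        set k' := k - 2^n with hk'
        have hknat : k = 2^n + k' := by omega
        have hk'1 : 1 ≤ k' := by omega
        have hk'2 : k' ≤ 2^n := by omega
        have hcast : (k':ℝ) = (k:ℝ) - 2^n := by
          rw [hknat]; push_cast; ring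
        have hmem : (2*x - 1) ∈ Gset (gBit true ε) :=
          ⟨fun i => b (i+1), by linarith, htail⟩
        have h1' : (2*(k':ℝ)-2)/2^(n+1) ≤ 2*x - 1 := by
          rw [hcast]
          have e := halfdiv (2*((k:ℝ)-2^n)-2) (n+1)
          have e2 : (2*((k:ℝ)-2^n)-2)/2^(n+2) = (2*(k:ℝ)-2)/2^(n+2) - 1/2 := by
            rw [hps2, hps1]; field_simp; ring
          rw [e2] at e
          linarith
        have h2' : 2*x - 1 ≤ (2*(k':ℝ)-1)/2^(n+1) := by
          rw [hcast]
          have e := halfdiv (2*((k:ℝ)-2^n)-1) (n+1)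
          have e2 : (2*((k:ℝ)-2^n)-1)/2^(n+2) = (2*(k:ℝ)-1)/2^(n+2) - 1/2 := by
            rw [hps2, hps1]; field_simp; ring
          rw [e2] at e
          linarith
        obtain ⟨b₁, hb₁, hg₁⟩ := ih k' hk'1 hk'2 (gBit true ε) (gBit_mem_Ioo hε)
          (2*x - 1) hmem h1' h2'
        refine ⟨consB true b₁, ?_, good_cons hg₁⟩
        rw [fBin_cons, hb₁, hcast]
        simp only [if_true]
        rw [hps1]
        field_simp
        ring


/-- Quasi self-similarity of the set of good channels:
`G_n(k) = G_{n+1}(2k-1) ∪ G_{n+1}(2k)` and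
`2·G_{n+1}(2k-1) - (k-1)2^{-n} ⊆ G_n(k) ⊆ 2·G_{n+1}(2k) - k·2^{-n}`. -/
theorem good_quasi_self_similar (ε : ℝ) (hε : ε ∈ Set.Ioo (0 : ℝ) 1) (n k : ℕ)
    (hk1 : 1 ≤ k) (hk2 : k ≤ 2 ^ n) :
    GnSet ε n k = GnSet ε (n + 1) (2 * k - 1) ∪ GnSet ε (n + 1) (2 * k) ∧
    (fun x => 2 * x - ((k : ℝ) - 1) / 2 ^ n) '' GnSet ε (n + 1) (2 * k - 1) ⊆ GnSet ε n k ∧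
    GnSet ε n k ⊆ (fun x => 2 * x - (k : ℝ) / 2 ^ n) '' GnSet ε (n + 1) (2 * k) := by
  have hp0 : (0:ℝ) < 2^n := by positivity
  have hp1 : (0:ℝ) < 2^(n+1) := by positivity
  have hcast : ((2*k - 1 : ℕ) : ℝ) = 2*(k:ℝ) - 1 := by
    rw [Nat.cast_sub (by omega : 1 ≤ 2*k)]; push_cast; ring
  have hcast2 : ((2*k : ℕ):ℝ) = 2*(k:ℝ) := by push_cast; ring
  have eA : (2*(k:ℝ) - 1 - 1)/2^(n+1) = ((k:ℝ)-1)/2^n := by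
    rw [pow_succ]; field_simp; ring
  have eAB : ((k:ℝ)-1)/2^n = (2*(k:ℝ) - 2)/2^(n+1) := by
    rw [pow_succ]; field_simp
  have eC : 2*(k:ℝ)/2^(n+1) = (k:ℝ)/2^n := by
    rw [pow_succ]; field_simp
  have e1 : GnSet ε (n+1) (2*k - 1)
      = Gset ε ∩ Set.Icc ((2*(k:ℝ) - 2)/2^(n+1)) ((2*(k:ℝ) - 1)/2^(n+1)) := by
    unfold GnSet; rw [hcast, eA, eAB]
  have e2 : GnSet ε (n+1) (2*k)
      = Gset ε ∩ Set.Icc ((2*(k:ℝ) - 1)/2^(n+1)) ((k:ℝ)/2^n) := by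
    unfold GnSet; rw [hcast2, eC]
  refine ⟨?_, ?_, ?_⟩
  · rw [e1, e2, ← Set.inter_union_distrib_left,
      Set.Icc_union_Icc_eq_Icc (by gcongr <;> linarith)
        (by rw [← eC]; gcongr <;> linarith)]
    unfold GnSet
    rw [eAB]
  · rw [e1]
    rintro y ⟨x, ⟨hxG, hx1, hx2⟩, rfl⟩
    have hmem := lemB n k hk1 hk2 ε hε x hxG hx1 hx2
    refine ⟨hmem, ?_, ?_⟩
    · show ((k:ℝ)-1)/2^n ≤ 2*x - ((k:ℝ)-1)/2^n
      rw [eAB]; linarith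
    · show 2*x - ((k:ℝ)-1)/2^n ≤ (k:ℝ)/2^n
      have e3 : (2*(k:ℝ)-1)/2^n - ((k:ℝ)-1)/2^n = (k:ℝ)/2^n := by
        field_simp; ring
      linarith [halfdiv (2*(k:ℝ)-1) n, e3]
  · rw [e2]
    rintro x ⟨hxG, hx1, hx2⟩
    refine ⟨x/2 + (k:ℝ)/2^(n+1), ⟨lemA n k hk1 hk2 ε hε x hxG hx1 hx2, ?_, ?_⟩, ?_⟩
    · have e4 : ((k:ℝ)-1)/2^(n+1) + (k:ℝ)/2^(n+1) = (2*(k:ℝ)-1)/2^(n+1) := by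
        rw [← add_div]; congr 1; ring
      linarith [halfdiv ((k:ℝ)-1) n, e4]
    · linarith [halfdiv ((k:ℝ)) n]
    · show 2*(x/2 + (k:ℝ)/2^(n+1)) - (k:ℝ)/2^n = x
      linarith [halfdiv ((k:ℝ)) n]

end
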